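/- Every f = h + conj(g) ∈ F_H^0 satisfies the lower growth bound |f(z)| ≥ |z| - |z|²/2 for all z ∈ 𝔻. In particular, f(𝔻) contains the disk {w : |w| < 1/2}. -/

import Mathlib

open Metric

lemma exists_unit_factor (a b : ℂ) : ∃ c : ℂ, ‖c‖ = 1 ∧ ‖a + c * b‖ = ‖a‖ + ‖b‖ := by
  rcases eq_or_ne b 0 with rfl | hb
  · exact ⟨1, by simp, by simp⟩
  rcases eq_or_ne a 0 with rfl | ha
  · have hnb : (0:ℝ) < ‖b‖ := norm_pos_iff.2 hb
    refine ⟨(starRingEnd ℂ) b / ‖b‖, ?_, ?_⟩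
    · rw [norm_div, RCLike.norm_conj, Complex.norm_real, Real.norm_of_nonneg hnb.le,
        div_self hnb.ne']
    · rw [zero_add, norm_zero, zero_add, norm_mul, norm_div, RCLike.norm_conj,
        Complex.norm_real, Real.norm_of_nonneg hnb.le, div_self hnb.ne', one_mul]
  · have hna : (0:ℝ) < ‖a‖ := norm_pos_iff.2 ha
    have hnb : (0:ℝ) < ‖b‖ := norm_pos_iff.2 hb
    refine ⟨a * (starRingEnd ℂ) b / (↑‖a‖ * ↑‖b‖), ?_, ?_⟩
    · rw [norm_div, norm_mul, norm_mul, RCLike.norm_conj, Complex.norm_real,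
        Complex.norm_real, Real.norm_of_nonneg hna.le, Real.norm_of_nonneg hnb.le]
      exact div_self (mul_pos hna hnb).ne'
    · have hcb : a * (starRingEnd ℂ) b / (↑‖a‖ * ↑‖b‖) * b = a * (↑‖b‖ / ↑‖a‖) := by
        have hb2 : ((starRingEnd ℂ) b) * b = (↑‖b‖:ℂ) ^ 2 := by
          rw [mul_comm, Complex.mul_conj']
        have hb' : (↑‖b‖:ℂ) ≠ 0 := by exact_mod_cast hnb.ne'
        have ha' : (↑‖a‖:ℂ) ≠ 0 := by exact_mod_cast hna.ne'
        field_simp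
        exact hb2
      rw [hcb, ← mul_one_add, norm_mul]
      have h1 : ‖(1 : ℂ) + ↑‖b‖ / ↑‖a‖‖ = 1 + ‖b‖ / ‖a‖ := by
        rw [show ((1:ℂ) + ↑‖b‖/↑‖a‖) = ((1 + ‖b‖/‖a‖ : ℝ) : ℂ) by push_cast; ring,
          Complex.norm_real, Real.norm_of_nonneg (by positivity)]
      rw [h1]
      rw [mul_add, mul_one, mul_div_cancel₀ _ hna.ne']

lemma schwarz_sum (h g : ℂ → ℂ)
    (hh : DifferentiableOn ℂ h (ball (0:ℂ) 1))
    (hg : DifferentiableOn ℂ g (ball (0:ℂ) 1))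
    (h1 : deriv h 0 = 1) (g1 : deriv g 0 = 0)
    (hineq : ∀ z ∈ ball (0:ℂ) 1, ‖deriv h z - 1‖ < 1 - ‖deriv g z‖) :
    ∀ z ∈ ball (0:ℂ) 1, ‖deriv h z - 1‖ + ‖deriv g z‖ ≤ ‖z‖ := by
  intro z hz
  obtain ⟨c, hc1, hc⟩ := exists_unit_factor (deriv h z - 1) (deriv g z)
  set q : ℂ → ℂ := fun w => (deriv h w - 1) + c * deriv g w with hq
  have hdh : DifferentiableOn ℂ (deriv h) (ball (0:ℂ) 1) :=
    ((hh.analyticOnNhd isOpen_ball).deriv).differentiableOn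
  have hdg : DifferentiableOn ℂ (deriv g) (ball (0:ℂ) 1) :=
    ((hg.analyticOnNhd isOpen_ball).deriv).differentiableOn
  have hdq : DifferentiableOn ℂ q (ball (0:ℂ) 1) :=
    (hdh.sub (differentiableOn_const 1)).add ((differentiableOn_const c).mul hdg)
  have hq0 : q 0 = 0 := by simp [hq, h1, g1]
  have hmaps : Set.MapsTo q (ball (0:ℂ) 1) (ball (0:ℂ) 1) := by
    intro w hw
    rw [mem_ball_zero_iff]
    calc ‖q w‖ ≤ ‖deriv h w - 1‖ + ‖c * deriv g w‖ := norm_add_le _ _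
    _ = ‖deriv h w - 1‖ + ‖deriv g w‖ := by rw [norm_mul, hc1, one_mul]
    _ < 1 := by linarith [hineq w hw]
  have := Complex.dist_le_dist_of_mapsTo_ball hdq (by rw [hq0]; exact hmaps.mono_right ball_subset_closedBall) hz
  rw [hq0] at this
  rw [dist_zero_right, dist_zero_right] at this
  have hqz : ‖q z‖ = ‖deriv h z - 1‖ + ‖deriv g z‖ := hc
  linarith [this, hqz]

lemma ftc_bound (h g : ℂ → ℂ)
    (hh : DifferentiableOn ℂ h (ball (0:ℂ) 1))
    (hg : DifferentiableOn ℂ g (ball (0:ℂ) 1))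
    (h0 : h 0 = 0) (g0 : g 0 = 0)
    (hsum : ∀ w ∈ ball (0:ℂ) 1, ‖deriv h w - 1‖ + ‖deriv g w‖ ≤ ‖w‖)
    (z : ℂ) (hz : z ∈ ball (0:ℂ) 1) :
    ‖h z + (starRingEnd ℂ) (g z) - z‖ ≤ ‖z‖ ^ 2 / 2 := by
  have hz1 : ‖z‖ < 1 := mem_ball_zero_iff.1 hz
  set γ : ℝ → ℂ := fun t => (t : ℂ) * z with hγdef
  have hγmem : ∀ t ∈ Set.uIcc (0:ℝ) 1, γ t ∈ ball (0:ℂ) 1 := by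
    intro t ht
    rw [Set.uIcc_of_le (by norm_num)] at ht
    rw [mem_ball_zero_iff, hγdef]
    simp only [norm_mul, Complex.norm_real]
    calc ‖t‖ * ‖z‖ ≤ 1 * ‖z‖ := by
          apply mul_le_mul_of_nonneg_right _ (norm_nonneg z)
          rw [Real.norm_of_nonneg ht.1]; exact ht.2
    _ < 1 := by rwa [one_mul]
  have hγd : ∀ t : ℝ, HasDerivAt γ z t := fun t => by
    simpa using ((hasDerivAt_id t).ofReal_comp.mul_const z)
  set ψ : ℝ → ℂ := fun t =>
    z * (deriv h (γ t) - 1) + (starRingEnd ℂ) (z * deriv g (γ t)) with hψdef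
  set φ : ℝ → ℂ := fun t => h (γ t) + (starRingEnd ℂ) (g (γ t)) - γ t with hφdef
  have hφd : ∀ t ∈ Set.uIcc (0:ℝ) 1, HasDerivAt φ (ψ t) t := by
    intro t ht
    have hmem := hγmem t ht
    have hhd : HasDerivAt h (deriv h (γ t)) (γ t) :=
      (hh.differentiableAt (isOpen_ball.mem_nhds hmem)).hasDerivAt
    have hgd : HasDerivAt g (deriv g (γ t)) (γ t) :=
      (hg.differentiableAt (isOpen_ball.mem_nhds hmem)).hasDerivAt
    have H1 : HasDerivAt (fun s => h (γ s)) (z • deriv h (γ t)) t :=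
      hhd.scomp t (hγd t)
    have H2g : HasDerivAt (fun s => g (γ s)) (z • deriv g (γ t)) t :=
      hgd.scomp t (hγd t)
    have H2 : HasDerivAt (fun s => (starRingEnd ℂ) (g (γ s)))
        ((starRingEnd ℂ) (z • deriv g (γ t))) t := by
      have := Complex.conjCLE.toContinuousLinearMap.hasFDerivAt.comp_hasDerivAt t H2g
      simpa [Function.comp_def] using this
    have H := (H1.add H2).sub (hγd t)
    have heq : z • deriv h (γ t) + (starRingEnd ℂ) (z • deriv g (γ t)) - z = ψ t := by
      simp only [hψdef, smul_eq_mul]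
      ring
    rw [← heq]
    exact H
  have hγc : Continuous γ := by
    exact Complex.continuous_ofReal.mul continuous_const
  have hch : ContinuousOn (deriv h) (ball (0:ℂ) 1) :=
    ((hh.analyticOnNhd isOpen_ball).deriv).differentiableOn.continuousOn
  have hcg : ContinuousOn (deriv g) (ball (0:ℂ) 1) :=
    ((hg.analyticOnNhd isOpen_ball).deriv).differentiableOn.continuousOn
  have hψc : ContinuousOn ψ (Set.uIcc (0:ℝ) 1) := by
    apply ContinuousOn.add
    · exact continuousOn_const.mul ((hch.comp hγc.continuousOn hγmem).sub continuousOn_const)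
    · exact continuous_star.comp_continuousOn
        (continuousOn_const.mul (hcg.comp hγc.continuousOn hγmem))
  have hint : IntervalIntegrable ψ MeasureTheory.volume 0 1 := hψc.intervalIntegrable
  have heq2 : ∫ t in (0:ℝ)..1, ψ t = φ 1 - φ 0 :=
    intervalIntegral.integral_eq_sub_of_hasDerivAt hφd hint
  have hφ1 : φ 1 = h z + (starRingEnd ℂ) (g z) - z := by simp [hφdef, hγdef]
  have hφ0 : φ 0 = 0 := by simp [hφdef, hγdef, h0, g0]
  have hbound : ‖∫ t in (0:ℝ)..1, ψ t‖ ≤ |∫ t in (0:ℝ)..1, t * ‖z‖ ^ 2| := by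
    apply intervalIntegral.norm_integral_le_abs_of_norm_le
    · rw [Set.uIoc_of_le (by norm_num : (0:ℝ) ≤ 1)]
      filter_upwards [MeasureTheory.ae_restrict_mem measurableSet_Ioc] with t ht
      have ht' : t ∈ Set.uIcc (0:ℝ) 1 := by
        rw [Set.uIcc_of_le (by norm_num)]; exact ⟨ht.1.le, ht.2⟩
      have hmem := hγmem t ht'
      have hγt : ‖γ t‖ = t * ‖z‖ := by
        simp only [hγdef, norm_mul, Complex.norm_real, Real.norm_of_nonneg ht.1.le]
      calc ‖ψ t‖ ≤ ‖z * (deriv h (γ t) - 1)‖ + ‖(starRingEnd ℂ) (z * deriv g (γ t))‖ :=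
            norm_add_le _ _
      _ = ‖z‖ * ‖deriv h (γ t) - 1‖ + ‖z‖ * ‖deriv g (γ t)‖ := by
            rw [RCLike.norm_conj, norm_mul, norm_mul]
      _ = ‖z‖ * (‖deriv h (γ t) - 1‖ + ‖deriv g (γ t)‖) := by ring
      _ ≤ ‖z‖ * ‖γ t‖ := by
            apply mul_le_mul_of_nonneg_left (hsum _ hmem) (norm_nonneg z)
      _ = t * ‖z‖ ^ 2 := by rw [hγt]; ring
    · exact (Continuous.intervalIntegrable (by continuity) _ _)
  have hval : ∫ t in (0:ℝ)..1, t * ‖z‖ ^ 2 = ‖z‖ ^ 2 / 2 := by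
    rw [intervalIntegral.integral_mul_const, integral_id]
    norm_num
    ring
  rw [heq2, hφ1, hφ0, sub_zero] at hbound
  rw [hval] at hbound
  calc ‖h z + (starRingEnd ℂ) (g z) - z‖ ≤ |‖z‖ ^ 2 / 2| := hbound
  _ = ‖z‖ ^ 2 / 2 := abs_of_nonneg (by positivity)

lemma lip_bound (h g : ℂ → ℂ)
    (hh : DifferentiableOn ℂ h (ball (0:ℂ) 1))
    (hg : DifferentiableOn ℂ g (ball (0:ℂ) 1))
    (hsum : ∀ w ∈ ball (0:ℂ) 1, ‖deriv h w - 1‖ + ‖deriv g w‖ ≤ ‖w‖)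
    (r : ℝ) (hr1 : r < 1) :
    ∀ x ∈ closedBall (0:ℂ) r, ∀ y ∈ closedBall (0:ℂ) r,
      ‖(h y + (starRingEnd ℂ) (g y) - y) - (h x + (starRingEnd ℂ) (g x) - x)‖ ≤ r * ‖y - x‖ := by
  intro x hx y hy
  have hsub : closedBall (0:ℂ) r ⊆ ball (0:ℂ) 1 := fun w hw => by
    rw [mem_ball_zero_iff]
    exact lt_of_le_of_lt (mem_closedBall_zero_iff.1 hw) hr1
  set F' : ℂ → ℂ →L[ℝ] ℂ := fun w =>
    ((ContinuousLinearMap.smulRight (1 : ℂ →L[ℂ] ℂ) (deriv h w - 1)).restrictScalars ℝ) +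
    (Complex.conjCLE.toContinuousLinearMap.comp
      ((ContinuousLinearMap.smulRight (1 : ℂ →L[ℂ] ℂ) (deriv g w)).restrictScalars ℝ)) with hF'
  have hderiv : ∀ w ∈ closedBall (0:ℂ) r,
      HasFDerivWithinAt (fun v => h v + (starRingEnd ℂ) (g v) - v) (F' w) (closedBall (0:ℂ) r) w := by
    intro w hw
    have hw' := hsub hw
    have hhd : HasDerivAt h (deriv h w) w :=
      (hh.differentiableAt (isOpen_ball.mem_nhds hw')).hasDerivAt
    have hgd : HasDerivAt g (deriv g w) w :=
      (hg.differentiableAt (isOpen_ball.mem_nhds hw')).hasDerivAt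
    have H1 : HasFDerivAt (fun v => h v - v)
        ((ContinuousLinearMap.smulRight (1 : ℂ →L[ℂ] ℂ) (deriv h w - 1)).restrictScalars ℝ) w := by
      have := (hhd.sub (hasDerivAt_id w)).hasFDerivAt
      exact this.restrictScalars ℝ
    have H2 : HasFDerivAt (fun v => (starRingEnd ℂ) (g v))
        (Complex.conjCLE.toContinuousLinearMap.comp
          ((ContinuousLinearMap.smulRight (1 : ℂ →L[ℂ] ℂ) (deriv g w)).restrictScalars ℝ)) w := by
      have hg' : HasFDerivAt g
          ((ContinuousLinearMap.smulRight (1 : ℂ →L[ℂ] ℂ) (deriv g w)).restrictScalars ℝ) w :=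
        hgd.hasFDerivAt.restrictScalars ℝ
      have := Complex.conjCLE.toContinuousLinearMap.hasFDerivAt.comp w hg'
      simpa [Function.comp_def] using this
    have H : HasFDerivAt (fun v => h v + (starRingEnd ℂ) (g v) - v) (F' w) w := by
      have := H1.add H2
      have heq : (fun v => h v - v + (starRingEnd ℂ) (g v))
          = fun v => h v + (starRingEnd ℂ) (g v) - v := by funext v; ring
      rw [← heq]
      exact this
    exact H.hasFDerivWithinAt
  have hnorm : ∀ w ∈ closedBall (0:ℂ) r, ‖F' w‖ ≤ r := by
    intro w hw
    apply ContinuousLinearMap.opNorm_le_bound _ (le_trans (norm_nonneg w) (mem_closedBall_zero_iff.1 hw))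
    intro v
    have happ : F' w v = v * (deriv h w - 1) + (starRingEnd ℂ) (v * deriv g w) := by
      simp [hF', Complex.conjCLE_apply, smul_eq_mul]
    rw [happ]
    calc ‖v * (deriv h w - 1) + (starRingEnd ℂ) (v * deriv g w)‖
        ≤ ‖v * (deriv h w - 1)‖ + ‖(starRingEnd ℂ) (v * deriv g w)‖ := norm_add_le _ _
    _ = ‖v‖ * ‖deriv h w - 1‖ + ‖v‖ * ‖deriv g w‖ := by rw [RCLike.norm_conj, norm_mul, norm_mul]
    _ = (‖deriv h w - 1‖ + ‖deriv g w‖) * ‖v‖ := by ring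
    _ ≤ ‖w‖ * ‖v‖ := mul_le_mul_of_nonneg_right (hsum w (hsub hw)) (norm_nonneg v)
    _ ≤ r * ‖v‖ := mul_le_mul_of_nonneg_right (mem_closedBall_zero_iff.1 hw) (norm_nonneg v)
  exact (convex_closedBall (0:ℂ) r).norm_image_sub_le_of_norm_hasFDerivWithin_le
    hderiv hnorm hx hy

theorem growth_lower_bound
    (h g : ℂ → ℂ)
    (hh : DifferentiableOn ℂ h (ball (0:ℂ) 1))
    (hg : DifferentiableOn ℂ g (ball (0:ℂ) 1))
    (h0 : h 0 = 0) (h1 : deriv h 0 = 1) (g0 : g 0 = 0) (g1 : deriv g 0 = 0)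
    (hineq : ∀ z ∈ ball (0:ℂ) 1, ‖deriv h z - 1‖ < 1 - ‖deriv g z‖) :
    (∀ z ∈ ball (0:ℂ) 1,
      ‖z‖ - ‖z‖ ^ 2 / 2 ≤ ‖h z + (starRingEnd ℂ) (g z)‖) ∧
    ball (0:ℂ) (1/2) ⊆ (fun z => h z + (starRingEnd ℂ) (g z)) '' (ball (0:ℂ) 1) := by
  have hsum := schwarz_sum h g hh hg h1 g1 hineq
  have hftc := ftc_bound h g hh hg h0 g0 hsum
  constructor
  · intro z hz
    have hb := hftc z hz
    have h2 : ‖z‖ - ‖h z + (starRingEnd ℂ) (g z)‖ ≤ ‖z - (h z + (starRingEnd ℂ) (g z))‖ :=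
      norm_sub_norm_le _ _
    rw [norm_sub_rev] at h2
    linarith
  · intro w hw
    have hwn : ‖w‖ < 1/2 := mem_ball_zero_iff.1 hw
    set σ : ℝ := Real.sqrt (1 - 2 * ‖w‖) with hσdef
    have hσsq : σ ^ 2 = 1 - 2 * ‖w‖ := Real.sq_sqrt (by linarith)
    have hσpos : 0 < σ := Real.sqrt_pos.2 (by linarith)
    have hσle : σ ≤ 1 := by nlinarith [norm_nonneg w]
    set r : ℝ := 1 - σ with hrdef
    have hr0 : 0 ≤ r := by linarith
    have hr1 : r < 1 := by linarith
    have hreq : ‖w‖ + r ^ 2 / 2 = r := by nlinarith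
    have hlip := lip_bound h g hh hg hsum r hr1
    set T : ℂ → ℂ := fun z => w - (h z + (starRingEnd ℂ) (g z) - z) with hT
    have hmapsto : ∀ z ∈ closedBall (0:ℂ) r, T z ∈ closedBall (0:ℂ) r := by
      intro z hz
      have hzr : ‖z‖ ≤ r := mem_closedBall_zero_iff.1 hz
      have hzball : z ∈ ball (0:ℂ) 1 := mem_ball_zero_iff.2 (lt_of_le_of_lt hzr hr1)
      have hfz := hftc z hzball
      rw [mem_closedBall_zero_iff]
      calc ‖T z‖ ≤ ‖w‖ + ‖h z + (starRingEnd ℂ) (g z) - z‖ := norm_sub_le _ _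
      _ ≤ ‖w‖ + ‖z‖ ^ 2 / 2 := by linarith
      _ ≤ ‖w‖ + r ^ 2 / 2 := by nlinarith [norm_nonneg z]
      _ = r := hreq
    haveI : CompleteSpace (closedBall (0:ℂ) r) :=
      IsClosed.completeSpace_coe (hs := isClosed_closedBall)
    set K : NNReal := ⟨r, hr0⟩ with hK
    set T' : closedBall (0:ℂ) r → closedBall (0:ℂ) r :=
      fun z => ⟨T z, hmapsto z z.2⟩ with hT'
    have hlip' : LipschitzWith K T' := by
      apply LipschitzWith.of_dist_le_mul
      intro a b
      have hdiff : T (a:ℂ) - T (b:ℂ)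
          = (h (b:ℂ) + (starRingEnd ℂ) (g (b:ℂ)) - (b:ℂ))
            - (h (a:ℂ) + (starRingEnd ℂ) (g (a:ℂ)) - (a:ℂ)) := by
        simp only [hT]; ring
      have hd : dist (T (a:ℂ)) (T (b:ℂ)) ≤ r * dist (a:ℂ) (b:ℂ) := by
        rw [dist_eq_norm, hdiff, dist_eq_norm]
        calc ‖(h ↑b + (starRingEnd ℂ) (g ↑b) - ↑b) - (h ↑a + (starRingEnd ℂ) (g ↑a) - ↑a)‖
            ≤ r * ‖(b:ℂ) - (a:ℂ)‖ := hlip _ a.2 _ b.2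
        _ = r * ‖(a:ℂ) - (b:ℂ)‖ := by rw [norm_sub_rev]
      have : dist (T' a) (T' b) = dist (T (a:ℂ)) (T (b:ℂ)) := rfl
      rw [this]
      have hKr : (K : ℝ) = r := rfl
      rw [hKr]
      calc dist (T ↑a) (T ↑b) ≤ r * dist (a:ℂ) (b:ℂ) := hd
      _ = r * dist a b := by rw [Subtype.dist_eq]
    have hcontr : ContractingWith K T' := by
      constructor
      · rw [← NNReal.coe_lt_coe]
        exact hr1
      · exact hlip'
    obtain ⟨zf, hzf, -⟩ := hcontr.exists_fixedPoint
      ⟨0, mem_closedBall_self hr0⟩ (edist_ne_top _ _)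
    have hfix : T (zf:ℂ) = (zf:ℂ) := congrArg Subtype.val hzf
    have hzfball : (zf:ℂ) ∈ ball (0:ℂ) 1 :=
      mem_ball_zero_iff.2 (lt_of_le_of_lt (mem_closedBall_zero_iff.1 zf.2) hr1)
    refine ⟨(zf:ℂ), hzfball, ?_⟩
    have : w - (h (zf:ℂ) + (starRingEnd ℂ) (g (zf:ℂ)) - (zf:ℂ)) = (zf:ℂ) := hfix
    simp only
    linear_combination -this
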